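/- For every integer n ≥ 0 the pointwise identity c · (x[n]∘S^{n+2}) · ∏_{k=1}^{n} (x[k]∘S^{k+1}) = (c∘S²) · x'[n] · ∏_{k=1}^{n} (x[k]∘S^{k+2}) holds on E. -/

import Mathlib

/-- Continuant-like polynomial along the forward orbit of `S`. -/
noncomputable def Kx {E : Type*} (S : E ≃ E) (c : E → ℝ) : ℕ → E → ℝ
  | 0 => fun _ => 1
  | 1 => fun e => c e + 1
  | n + 2 => fun e => c e * Kx S c (n + 1) (S e) + c (S e) * Kx S c n (S (S e))

lemma Kx_pos {E : Type*} (S : E ≃ E) (c : E → ℝ) (hc : ∀ e, 0 < c e) :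
    ∀ n e, 0 < Kx S c n e := by
  intro n
  induction n using Nat.twoStepInduction with
  | zero => intro e; simp [Kx]
  | one => intro e; have := hc e; simp only [Kx]; positivity
  | more n ih1 ih2 =>
    intro e
    simp only [Kx]
    have := hc e; have := hc (S e); have := ih1 (S (S e)); have := ih2 (S e)
    positivity

lemma Kx_right {E : Type*} (S : E ≃ E) (c : E → ℝ) :
    ∀ n (e : E), Kx S c (n + 2) e =
      c ((⇑S)^[n + 1] e) * Kx S c (n + 1) e + c ((⇑S)^[n] e) * Kx S c n e := by
  intro n
  induction n using Nat.twoStepInduction with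
  | zero => intro e; simp [Kx]; ring
  | one => intro e; simp only [Kx, Function.iterate_succ_apply, Function.iterate_zero,
      Function.iterate_one, id_eq]; ring
  | more n ih1 ih2 =>
    intro e
    have h1 : Kx S c (n + 2 + 2) e
        = c e * Kx S c (n + 3) (S e) + c (S e) * Kx S c (n + 2) (S (S e)) := rfl
    rw [h1, ih2 (S e), ih1 (S (S e))]
    have e1 : (⇑S)^[n + 2] (S e) = (⇑S)^[n + 3] e := by
      rw [← Function.iterate_succ_apply]
    have e2 : (⇑S)^[n + 1] (S e) = (⇑S)^[n + 2] e := by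
      rw [← Function.iterate_succ_apply]
    have e3 : (⇑S)^[n + 1] (S (S e)) = (⇑S)^[n + 3] e := by
      rw [← Function.iterate_succ_apply, ← Function.iterate_succ_apply]
    have e4 : (⇑S)^[n] (S (S e)) = (⇑S)^[n + 2] e := by
      rw [← Function.iterate_succ_apply, ← Function.iterate_succ_apply]
    rw [e1, e2, e3, e4]
    have h2 : Kx S c (n + 3) e
        = c e * Kx S c (n + 2) (S e) + c (S e) * Kx S c (n + 1) (S (S e)) := rfl
    have h3 : Kx S c (n + 2) e
        = c e * Kx S c (n + 1) (S e) + c (S e) * Kx S c n (S (S e)) := rfl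
    rw [h2, h3]
    ring

/-- Algebra step for the continued-fraction recursion. -/
lemma cf_alg (a b d k1 k0 : ℝ) (hb : b ≠ 0) (hk1 : k1 ≠ 0) :
    a * (1 + 1 / (b * k1 / (d * k0))) = a * (b * k1 + d * k0) / (b * k1) := by
  rw [one_div_div]
  field_simp

/-- Telescoping step. -/
lemma tele_alg (A B D K0 K1 : ℝ) (hA : A ≠ 0) (hB : B ≠ 0) (hK0 : K0 ≠ 0) :
    B * K0 / A * (D * K1 / (B * K0)) = D * K1 / A := by
  field_simp

/-- Final algebraic identity. -/
lemma main_alg (a0 a1 a2 aM aT P1 Q0 Q1 : ℝ)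
    (ha1 : a1 ≠ 0) (ha2 : a2 ≠ 0) (haM : aM ≠ 0) (hQ0 : Q0 ≠ 0) :
    a0 * (aT * Q1 / (aM * Q0)) * (aM * P1 / a1)
      = a2 * (a0 * P1 / (a1 * Q0)) * (aT * Q1 / a2) := by
  field_simp

theorem stmt_9 {E : Type*} (S : E ≃ E) (c : E → ℝ) (hc : ∀ e, 0 < c e)
    (x x' : ℕ → E → ℝ)
    (hx0 : ∀ e, x 0 e = c e)
    (hxs : ∀ n e, x (n + 1) e = c e * (1 + 1 / x n (S.symm e)))
    (hx'0 : ∀ e, x' 0 e = c e)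
    (hx's : ∀ n e, x' (n + 1) e = c e * (1 + 1 / x' n (S e))) :
    ∀ (n : ℕ) (e : E),
      c e * x n ((⇑S)^[n + 2] e) * ∏ k ∈ Finset.Icc 1 n, x k ((⇑S)^[k + 1] e) =
        c (S (S e)) * x' n e * ∏ k ∈ Finset.Icc 1 n, x k ((⇑S)^[k + 2] e) := by
  have cancel1 : ∀ (a : ℕ) (z : E), (⇑S)^[a] ((⇑S.symm)^[a] z) = z :=
    fun a => (Function.LeftInverse.iterate (fun z => S.apply_symm_apply z) a)
  have cancel2 : ∀ (a : ℕ) (z : E), (⇑S.symm)^[a] ((⇑S)^[a] z) = z :=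
    fun a => (Function.LeftInverse.iterate (fun z => S.symm_apply_apply z) a)
  have iter1 : ∀ (a b : ℕ) (z : E), (⇑S)^[a] ((⇑S.symm)^[a + b] z) = (⇑S.symm)^[b] z := by
    intro a b z
    rw [Function.iterate_add_apply, cancel1]
  have iter2 : ∀ (a b : ℕ) (z : E), (⇑S.symm)^[a] ((⇑S)^[a + b] z) = (⇑S)^[b] z := by
    intro a b z
    rw [Function.iterate_add_apply, cancel2]
  have Kpos := Kx_pos S c hc
  have Kne : ∀ n e, Kx S c n e ≠ 0 := fun n e => (Kpos n e).ne'
  have cne : ∀ e, c e ≠ 0 := fun e => (hc e).ne'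
  -- formula for x'
  have hx'f : ∀ n e, x' (n + 1) e
      = c e * Kx S c (n + 1) (S e) / (c (S e) * Kx S c n (S (S e))) := by
    intro n
    induction n with
    | zero =>
      intro e
      rw [hx's, hx'0]
      have h1 := cne (S e)
      simp only [Kx]
      field_simp
    | succ n ih =>
      intro e
      rw [hx's, ih (S e),
        cf_alg (c e) (c (S e)) (c (S (S e))) (Kx S c (n + 1) (S (S e)))
          (Kx S c n (S (S (S e)))) (cne (S e)) (Kne (n + 1) (S (S e)))]
      have h2 : Kx S c (n + 1 + 1) (S e)
          = c (S e) * Kx S c (n + 1) (S (S e)) + c (S (S e)) * Kx S c n (S (S (S e))) := rfl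
      rw [h2]
  -- formula for x
  have hxf : ∀ n p, x (n + 1) p
      = c p * Kx S c (n + 1) ((⇑S.symm)^[n + 1] p)
        / (c (S.symm p) * Kx S c n ((⇑S.symm)^[n + 1] p)) := by
    intro n
    induction n with
    | zero =>
      intro p
      rw [hxs, hx0]
      simp only [zero_add, Function.iterate_one, Kx]
      have h1 := cne (S.symm p)
      field_simp
    | succ n ih =>
      intro p
      rw [hxs, ih (S.symm p)]
      have hq : (⇑S.symm)^[n + 1] (S.symm p) = (⇑S.symm)^[n + 2] p := by
        rw [← Function.iterate_succ_apply]
      rw [hq,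
        cf_alg (c p) (c (S.symm p)) (c (S.symm (S.symm p)))
          (Kx S c (n + 1) ((⇑S.symm)^[n + 2] p)) (Kx S c n ((⇑S.symm)^[n + 2] p))
          (cne (S.symm p)) (Kne (n + 1) ((⇑S.symm)^[n + 2] p))]
      have hr : Kx S c (n + 2) ((⇑S.symm)^[n + 2] p)
          = c ((⇑S)^[n + 1] ((⇑S.symm)^[n + 2] p)) * Kx S c (n + 1) ((⇑S.symm)^[n + 2] p)
            + c ((⇑S)^[n] ((⇑S.symm)^[n + 2] p)) * Kx S c n ((⇑S.symm)^[n + 2] p) :=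
        Kx_right S c n _
      have e1 : (⇑S)^[n + 1] ((⇑S.symm)^[n + 2] p) = S.symm p := by
        rw [show n + 2 = (n + 1) + 1 from rfl, iter1, Function.iterate_one]
      have e2 : (⇑S)^[n] ((⇑S.symm)^[n + 2] p) = S.symm (S.symm p) := by
        rw [iter1 n 2 p]
        simp [Function.iterate_succ_apply]
      rw [e1, e2] at hr
      have hidx : (⇑S.symm)^[n + 1 + 1] p = (⇑S.symm)^[n + 2] p := rfl
      have hidx2 : Kx S c (n + 1 + 1) ((⇑S.symm)^[n + 2] p)
          = Kx S c (n + 2) ((⇑S.symm)^[n + 2] p) := rfl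
      rw [hidx, hidx2, hr]
  -- telescoping product
  have prodP : ∀ n (e : E), ∏ k ∈ Finset.Icc 1 n, x k ((⇑S)^[k + 1] e)
      = c ((⇑S)^[n + 1] e) * Kx S c n (S e) / c (S e) := by
    intro n
    induction n with
    | zero =>
      intro e
      have h1 : (⇑S)^[0 + 1] e = S e := by simp
      simp only [Finset.Icc_eq_empty_of_lt (by omega : (0:ℕ) < 1), Finset.prod_empty, Kx,
        mul_one, h1]
      rw [div_self (cne (S e))]
    | succ n ih =>
      intro e
      rw [Finset.prod_Icc_succ_top (by omega : 1 ≤ n + 1), ih e,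
        hxf n ((⇑S)^[n + 1 + 1] e)]
      have e1 : (⇑S.symm)^[n + 1] ((⇑S)^[n + 1 + 1] e) = S e := by
        rw [iter2 (n + 1) 1 e, Function.iterate_one]
      have e2 : S.symm ((⇑S)^[n + 1 + 1] e) = (⇑S)^[n + 1] e := by
        rw [Function.iterate_succ_apply', Equiv.symm_apply_apply]
      rw [e1, e2]
      exact tele_alg (c (S e)) (c ((⇑S)^[n + 1] e)) (c ((⇑S)^[n + 1 + 1] e))
        (Kx S c n (S e)) (Kx S c (n + 1) (S e))
        (cne (S e)) (cne ((⇑S)^[n + 1] e)) (Kne n (S e))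
  -- main proof
  intro n e
  cases n with
  | zero =>
    simp only [Nat.zero_add, Finset.Icc_eq_empty_of_lt (by omega : (0:ℕ) < 1),
      Finset.prod_empty, mul_one]
    rw [hx0, hx'0]
    have : (⇑S)^[2] e = S (S e) := by
      simp [Function.iterate_succ_apply']
    rw [this]; ring
  | succ m =>
    have prodQ : ∏ k ∈ Finset.Icc 1 (m + 1), x k ((⇑S)^[k + 2] e)
        = c ((⇑S)^[m + 3] e) * Kx S c (m + 1) (S (S e)) / c (S (S e)) := by
      have hcongr : ∀ k ∈ Finset.Icc 1 (m + 1),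
          x k ((⇑S)^[k + 2] e) = x k ((⇑S)^[k + 1] (S e)) := by
        intro k _
        rw [← Function.iterate_succ_apply]
      rw [Finset.prod_congr rfl hcongr, prodP (m + 1) (S e),
        ← Function.iterate_succ_apply]
    rw [prodQ, prodP (m + 1) e, hx'f m e, hxf m ((⇑S)^[m + 1 + 2] e)]
    have e1 : (⇑S.symm)^[m + 1] ((⇑S)^[m + 1 + 2] e) = S (S e) := by
      rw [iter2 (m + 1) 2 e]
      simp [Function.iterate_succ_apply]
    have e2 : S.symm ((⇑S)^[m + 1 + 2] e) = (⇑S)^[m + 2] e := by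
      rw [show m + 1 + 2 = (m + 2) + 1 from rfl, Function.iterate_succ_apply',
        Equiv.symm_apply_apply]
    have e3 : (⇑S)^[m + 1 + 2] e = (⇑S)^[m + 3] e := rfl
    have e4 : (⇑S)^[m + 1 + 1] e = (⇑S)^[m + 2] e := rfl
    rw [e1, e2, e3, e4]
    exact main_alg (c e) (c (S e)) (c (S (S e))) (c ((⇑S)^[m + 2] e)) (c ((⇑S)^[m + 3] e))
      (Kx S c (m + 1) (S e)) (Kx S c m (S (S e))) (Kx S c (m + 1) (S (S e)))
      (cne (S e)) (cne (S (S e))) (cne ((⇑S)^[m + 2] e)) (Kne m (S (S e)))
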